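/- Hellinger-type stability of Bayesian posteriors under perturbation of the log-likelihood: let $\mu_0$ be a probability measure on a set $U$, and let $\Phi, \Psi: U \to \mathbb{R}$ be measurable with $0 \le \Phi, \Psi \le M$ for some $M < \infty$. Define posteriors $d\mu/d\mu_0 = Z_\mu^{-1} e^{-\Phi}$ and $d\nu/d\mu_0 = Z_\nu^{-1} e^{-\Psi}$ with $Z_\mu = \int e^{-\Phi} d\mu_0$, $Z_\nu = \int e^{-\Psi} d\mu_0$. Then there exists a constant $C = C(M)$, independent of $\Phi$ and $\Psi$, such that the Hellinger distance satisfies $d_{\mathrm{Hell}}(\mu,\nu) \le C \|\Phi - \Psi\|_{L^2_{\mu_0}(U)}$. -/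

import Mathlib

open MeasureTheory

lemma aux_int {Ω : Type*} [MeasurableSpace Ω] {μ : Measure Ω} [IsFiniteMeasure μ]
    {f : Ω → ℝ} (hf : AEStronglyMeasurable f μ) {C : ℝ} (h : ∀ x, |f x| ≤ C) :
    Integrable f μ :=
  (integrable_const C).mono' hf (ae_of_all _ fun x => by simpa using h x)

lemma exp_neg_sub_le {u v : ℝ} (hu : 0 ≤ u) (hv : 0 ≤ v) :
    |Real.exp (-u) - Real.exp (-v)| ≤ |u - v| := by
  wlog h : u ≤ v generalizing u v
  · rw [abs_sub_comm, abs_sub_comm u v]; exact this hv hu (le_of_not_ge h)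
  have h1 : Real.exp (-v) = Real.exp (-u) * Real.exp (u - v) := by
    rw [← Real.exp_add]; ring_nf
  have h2 : (u - v) + 1 ≤ Real.exp (u - v) := Real.add_one_le_exp _
  have h3 : Real.exp (-u) ≤ 1 := Real.exp_le_one_iff.2 (by linarith)
  have h4 : Real.exp (u - v) ≤ 1 := Real.exp_le_one_iff.2 (by linarith)
  have h5 : Real.exp (-v) ≤ Real.exp (-u) := Real.exp_le_exp.2 (by linarith)
  have h6 : 0 < Real.exp (-u) := Real.exp_pos _
  rw [abs_of_nonneg (by linarith), abs_of_nonpos (by linarith)]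
  nlinarith

lemma sqrt_sub_abs_le {a b : ℝ} (ha : 0 < a) (hb : 0 < b) :
    |Real.sqrt a - Real.sqrt b| ≤ |a - b| / (Real.sqrt a + Real.sqrt b) := by
  have hs : 0 < Real.sqrt a + Real.sqrt b := by positivity
  rw [le_div_iff₀ hs]
  have habs : |Real.sqrt a - Real.sqrt b| * (Real.sqrt a + Real.sqrt b)
      = |(Real.sqrt a - Real.sqrt b) * (Real.sqrt a + Real.sqrt b)| := by
    rw [abs_mul, abs_of_pos hs]
  rw [habs]
  have hkey : (Real.sqrt a - Real.sqrt b) * (Real.sqrt a + Real.sqrt b) = a - b := by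
    have h1 := Real.sq_sqrt ha.le
    have h2 := Real.sq_sqrt hb.le
    nlinarith
  rw [hkey]

lemma sqrt_exp_neg (t : ℝ) : Real.sqrt (Real.exp (-t)) = Real.exp (-(t/2)) := by
  rw [show Real.exp (-t) = Real.exp (-(t/2)) ^ 2 by rw [sq, ← Real.exp_add]; ring_nf,
    Real.sqrt_sq (Real.exp_pos _).le]

set_option maxHeartbeats 2000000 in
/-- Hellinger-type stability of Bayesian posteriors under perturbation of the log-likelihood:
for any `M ≥ 0` there is a constant `C = C(M)`, independent of `Φ` and `Ψ`, such that for all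
measurable `Φ, Ψ : Ω → ℝ` with `0 ≤ Φ, Ψ ≤ M`, the Hellinger distance between the posteriors
`dμ/dμ₀ = Z_μ⁻¹ e^{-Φ}` and `dν/dμ₀ = Z_ν⁻¹ e^{-Ψ}` is bounded by `C ‖Φ - Ψ‖_{L²_{μ₀}}`. -/
theorem stmt_19 {Ω : Type*} [MeasurableSpace Ω] (μ0 : Measure Ω)
    [IsProbabilityMeasure μ0] (M : ℝ) (hM : 0 ≤ M) :
    ∃ C : ℝ, 0 < C ∧
      ∀ Φ Ψ : Ω → ℝ, Measurable Φ → Measurable Ψ →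
        (∀ x, Φ x ∈ Set.Icc 0 M) → (∀ x, Ψ x ∈ Set.Icc 0 M) →
        Real.sqrt ((1/2) * ∫ x,
            (Real.sqrt (Real.exp (-Φ x) / ∫ y, Real.exp (-Φ y) ∂μ0) -
              Real.sqrt (Real.exp (-Ψ x) / ∫ y, Real.exp (-Ψ y) ∂μ0)) ^ 2 ∂μ0) ≤
          C * Real.sqrt (∫ x, (Φ x - Ψ x) ^ 2 ∂μ0) := by
  refine ⟨Real.exp (5*M/2), Real.exp_pos _, ?_⟩
  intro Φ Ψ hΦm hΨm hΦ hΨ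
  set Zμ := ∫ y, Real.exp (-Φ y) ∂μ0 with hZμdef
  set Zν := ∫ y, Real.exp (-Ψ y) ∂μ0 with hZνdef
  -- integrability of the likelihoods
  have hintΦ : Integrable (fun y => Real.exp (-Φ y)) μ0 :=
    aux_int (Real.measurable_exp.comp hΦm.neg).aestronglyMeasurable (C := 1)
      (fun x => by
        rw [abs_of_pos (Real.exp_pos _)]
        exact Real.exp_le_one_iff.2 (neg_nonpos.2 (hΦ x).1))
  have hintΨ : Integrable (fun y => Real.exp (-Ψ y)) μ0 :=
    aux_int (Real.measurable_exp.comp hΨm.neg).aestronglyMeasurable (C := 1)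
      (fun x => by
        rw [abs_of_pos (Real.exp_pos _)]
        exact Real.exp_le_one_iff.2 (neg_nonpos.2 (hΨ x).1))
  -- bounds on the normalizing constants
  have hZμ1 : Zμ ≤ 1 := by
    calc Zμ ≤ ∫ _, (1:ℝ) ∂μ0 :=
          integral_mono hintΦ (integrable_const 1)
            (fun x => Real.exp_le_one_iff.2 (neg_nonpos.2 (hΦ x).1))
      _ = 1 := by simp
  have hZν1 : Zν ≤ 1 := by
    calc Zν ≤ ∫ _, (1:ℝ) ∂μ0 :=
          integral_mono hintΨ (integrable_const 1)
            (fun x => Real.exp_le_one_iff.2 (neg_nonpos.2 (hΨ x).1))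
      _ = 1 := by simp
  have hZμ0 : Real.exp (-M) ≤ Zμ := by
    calc Real.exp (-M) = ∫ _, Real.exp (-M) ∂μ0 := by simp
      _ ≤ Zμ := integral_mono (integrable_const _) hintΦ
          (fun x => Real.exp_le_exp.2 (neg_le_neg (hΦ x).2))
  have hZν0 : Real.exp (-M) ≤ Zν := by
    calc Real.exp (-M) = ∫ _, Real.exp (-M) ∂μ0 := by simp
      _ ≤ Zν := integral_mono (integrable_const _) hintΨ
          (fun x => Real.exp_le_exp.2 (neg_le_neg (hΨ x).2))
  have hZμp : 0 < Zμ := (Real.exp_pos _).trans_le hZμ0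
  have hZνp : 0 < Zν := (Real.exp_pos _).trans_le hZν0
  set E := Real.exp (-(M/2)) with hEdef
  have hEp : 0 < E := Real.exp_pos _
  have hE2 : E * E = Real.exp (-M) := by rw [hEdef, ← Real.exp_add]; ring_nf
  have hexpM : Real.exp M * (E * E) = 1 := by
    rw [hE2, ← Real.exp_add]; simp
  set sμ := Real.sqrt Zμ with hsμdef
  set sν := Real.sqrt Zν with hsνdef
  have hsμp : 0 < sμ := Real.sqrt_pos.2 hZμp
  have hsνp : 0 < sν := Real.sqrt_pos.2 hZνp
  have hsμ0 : E ≤ sμ := by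
    rw [hEdef, ← sqrt_exp_neg M]; exact Real.sqrt_le_sqrt hZμ0
  have hsν0 : E ≤ sν := by
    rw [hEdef, ← sqrt_exp_neg M]; exact Real.sqrt_le_sqrt hZν0
  -- |√Zμ - √Zν| bound
  have hss : |sν - sμ| * (2 * E) ≤ |Zμ - Zν| := by
    have h := sqrt_sub_abs_le hZνp hZμp
    have h2 : 2 * E ≤ sν + sμ := by linarith
    have h3 : |sν - sμ| ≤ |Zν - Zμ| / (2 * E) :=
      h.trans (div_le_div₀ (abs_nonneg _) le_rfl (by positivity) h2)
    rw [abs_sub_comm Zμ Zν]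
    exact (le_div_iff₀ (by positivity)).1 h3
  -- |Zμ - Zν| ≤ ∫ |Φ - Ψ|
  have habs_int : Integrable (fun x => |Φ x - Ψ x|) μ0 :=
    aux_int ((hΦm.sub hΨm).abs).aestronglyMeasurable (C := M)
      (fun x => by
        rw [abs_abs]
        exact abs_le.2 ⟨by linarith [(hΦ x).1, (hΨ x).2], by linarith [(hΦ x).2, (hΨ x).1]⟩)
  set m := ∫ x, |Φ x - Ψ x| ∂μ0 with hmdef
  have hm0 : 0 ≤ m := integral_nonneg fun x => abs_nonneg _
  have hD : |Zμ - Zν| ≤ m := by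
    rw [hZμdef, hZνdef, ← integral_sub hintΦ hintΨ]
    calc |∫ y, (Real.exp (-Φ y) - Real.exp (-Ψ y)) ∂μ0|
        ≤ ∫ y, |Real.exp (-Φ y) - Real.exp (-Ψ y)| ∂μ0 := by
          simpa [Real.norm_eq_abs] using
            norm_integral_le_integral_norm (μ := μ0)
              (fun y => Real.exp (-Φ y) - Real.exp (-Ψ y))
      _ ≤ m := integral_mono (hintΦ.sub hintΨ).abs habs_int
          (fun x => exp_neg_sub_le (hΦ x).1 (hΨ x).1)
  -- Cauchy–Schwarz: m² ≤ ∫ (Φ - Ψ)²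
  have hint_sq : Integrable (fun x => (Φ x - Ψ x) ^ 2) μ0 :=
    aux_int ((hΦm.sub hΨm).pow_const 2).aestronglyMeasurable (C := M ^ 2)
      (fun x => by
        rw [abs_of_nonneg (sq_nonneg _)]
        exact sq_le_sq' (by linarith only [(hΦ x).1, (hΨ x).2]) (by linarith only [(hΦ x).2, (hΨ x).1]))
  set I := ∫ x, (Φ x - Ψ x) ^ 2 ∂μ0 with hIdef
  have hI0 : 0 ≤ I := integral_nonneg fun x => sq_nonneg _
  have hCS : m ^ 2 ≤ I := by
    have h0 : 0 ≤ ∫ x, (|Φ x - Ψ x| - m) ^ 2 ∂μ0 := integral_nonneg fun x => sq_nonneg _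
    have hexp : ∫ x, (|Φ x - Ψ x| - m) ^ 2 ∂μ0 = I - (2*m) * m + m ^ 2 := by
      have hp : ∀ x, (|Φ x - Ψ x| - m) ^ 2
          = (Φ x - Ψ x) ^ 2 - (2*m) * |Φ x - Ψ x| + m ^ 2 := fun x => by
        rw [sub_sq, sq_abs]; ring
      simp only [hp]
      have hint3 : Integrable (fun x => (Φ x - Ψ x) ^ 2 - 2 * m * |Φ x - Ψ x|) μ0 :=
        hint_sq.sub (habs_int.const_mul (2*m))
      rw [integral_add hint3 (integrable_const _),
        integral_sub hint_sq (habs_int.const_mul (2*m)), integral_const_mul, integral_const]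
      simp [hmdef, hIdef]
    linarith only [h0, hexp]
  have hD2 : (Zμ - Zν) ^ 2 ≤ I := by
    have h : (Zμ - Zν) ^ 2 ≤ m ^ 2 := by
      rw [← sq_abs (Zμ - Zν)]
      exact pow_le_pow_left₀ (abs_nonneg _) hD 2
    linarith
  clear_value Zμ Zν sμ sν E m I
  -- pointwise key bound
  have key : ∀ x,
      (Real.sqrt (Real.exp (-Φ x) / Zμ) - Real.sqrt (Real.exp (-Ψ x) / Zν)) ^ 2
        ≤ Real.exp M / 2 * (Φ x - Ψ x) ^ 2 + Real.exp (3*M) / 2 * (Zμ - Zν) ^ 2 := by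
    intro x
    have hFx : Real.sqrt (Real.exp (-Φ x) / Zμ) = Real.exp (-(Φ x / 2)) / sμ := by
      rw [hsμdef, Real.sqrt_div (Real.exp_pos _).le, sqrt_exp_neg]
    have hGx : Real.sqrt (Real.exp (-Ψ x) / Zν) = Real.exp (-(Ψ x / 2)) / sν := by
      rw [hsνdef, Real.sqrt_div (Real.exp_pos _).le, sqrt_exp_neg]
    rw [hFx, hGx]
    set F := Real.exp (-(Φ x / 2)) with hFdef
    set G := Real.exp (-(Ψ x / 2)) with hGdef
    have hFp : 0 < F := Real.exp_pos _
    have hGp : 0 < G := Real.exp_pos _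
    have hG1 : G ≤ 1 := Real.exp_le_one_iff.2 (by linarith only [(hΨ x).1])
    have hFG : |F - G| ≤ |Φ x - Ψ x| / 2 := by
      have h := exp_neg_sub_le (div_nonneg (hΦ x).1 (by norm_num : (0:ℝ) ≤ 2)) (div_nonneg (hΨ x).1 (by norm_num : (0:ℝ) ≤ 2))
      calc |F - G| ≤ |Φ x / 2 - Ψ x / 2| := h
        _ = |Φ x - Ψ x| / 2 := by
            rw [show Φ x / 2 - Ψ x / 2 = (Φ x - Ψ x) / 2 by ring, abs_div, abs_two]
    clear_value F G
    set t1 := (F - G) / sμ with ht1def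
    set t2 := G * (sν - sμ) / (sμ * sν) with ht2def
    have hsplit : F / sμ - G / sν = t1 + t2 := by
      rw [ht1def, ht2def]; field_simp; ring
    clear_value t1 t2
    -- first term
    have h1 : |t1| * (2 * E) ≤ |Φ x - Ψ x| := by
      have : |t1| = |F - G| / sμ := by rw [ht1def, abs_div, abs_of_pos hsμp]
      rw [this]
      have h2 : |F - G| / sμ ≤ |F - G| / E := div_le_div_of_nonneg_left (abs_nonneg _) hEp hsμ0
      calc |F - G| / sμ * (2 * E) ≤ |F - G| / E * (2 * E) := by
            apply mul_le_mul_of_nonneg_right h2 (by positivity)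
        _ = 2 * |F - G| := by field_simp
        _ ≤ |Φ x - Ψ x| := by linarith
    have h1sq : t1 ^ 2 ≤ Real.exp M / 4 * (Φ x - Ψ x) ^ 2 := by
      have hq := mul_self_le_mul_self (by positivity) h1
      nlinarith only [hq, hexpM, sq_abs t1, sq_abs (Φ x - Ψ x), Real.exp_pos M, hEp]
    -- second term
    have ht2 : |t2| ≤ |sν - sμ| * Real.exp M := by
      rw [ht2def, abs_div, abs_mul, abs_of_pos hGp, abs_of_pos (mul_pos hsμp hsνp),
        div_le_iff₀ (mul_pos hsμp hsνp)]
      have hEE : E * E ≤ sμ * sν := mul_le_mul hsμ0 hsν0 hEp.le hsμp.le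
      have hint1 : 0 ≤ |sν - sμ| * Real.exp M * (sμ * sν - E * E) :=
        mul_nonneg (mul_nonneg (abs_nonneg _) (Real.exp_pos M).le) (sub_nonneg.2 hEE)
      have hA : |sν - sμ| * (Real.exp M * (E * E)) = |sν - sμ| := by rw [hexpM, mul_one]
      have hint2 : 0 ≤ |sν - sμ| * (1 - G) :=
        mul_nonneg (abs_nonneg _) (sub_nonneg.2 hG1)
      linarith only [hint1, hA, hint2]
    have h2 : |t2| * (2 * E) ≤ |Zμ - Zν| * Real.exp M := by
      calc |t2| * (2 * E) ≤ |sν - sμ| * Real.exp M * (2 * E) :=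
            mul_le_mul_of_nonneg_right ht2 (by positivity)
        _ = |sν - sμ| * (2 * E) * Real.exp M := by ring
        _ ≤ |Zμ - Zν| * Real.exp M :=
            mul_le_mul_of_nonneg_right hss (Real.exp_pos M).le
    have h2sq : t2 ^ 2 ≤ Real.exp (3*M) / 4 * (Zμ - Zν) ^ 2 := by
      have hq := mul_self_le_mul_self (by positivity) h2
      have hid : Real.exp (-M) * Real.exp (3*M) = Real.exp M * Real.exp M := by
        rw [← Real.exp_add, ← Real.exp_add]; ring_nf
      nlinarith only [hq, hE2, hid, sq_abs t2, sq_abs (Zμ - Zν), Real.exp_pos (3*M),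
        Real.exp_pos (-M), Real.exp_pos M, hEp]
    rw [hsplit]
    nlinarith only [h1sq, h2sq, sq_nonneg (t1 - t2)]
  -- integrate
  set g := fun x => Real.exp M / 2 * (Φ x - Ψ x) ^ 2 + Real.exp (3*M) / 2 * (Zμ - Zν) ^ 2
    with hgdef
  have hgint : Integrable g μ0 := (hint_sq.const_mul _).add (integrable_const _)
  have hTmeas : AEStronglyMeasurable
      (fun x => (Real.sqrt (Real.exp (-Φ x) / Zμ) - Real.sqrt (Real.exp (-Ψ x) / Zν)) ^ 2) μ0 := by
    apply Measurable.aestronglyMeasurable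
    exact (((Real.continuous_sqrt.measurable.comp
        ((Real.measurable_exp.comp hΦm.neg).div_const Zμ)).sub
      (Real.continuous_sqrt.measurable.comp
        ((Real.measurable_exp.comp hΨm.neg).div_const Zν))).pow_const 2)
  have hintT : Integrable
      (fun x => (Real.sqrt (Real.exp (-Φ x) / Zμ) - Real.sqrt (Real.exp (-Ψ x) / Zν)) ^ 2) μ0 :=
    hgint.mono' hTmeas (ae_of_all _ fun x => by
      rw [Real.norm_eq_abs, abs_of_nonneg (sq_nonneg _)]
      exact key x)
  have hIT : ∫ x, (Real.sqrt (Real.exp (-Φ x) / Zμ) - Real.sqrt (Real.exp (-Ψ x) / Zν)) ^ 2 ∂μ0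
      ≤ ∫ x, g x ∂μ0 := integral_mono hintT hgint key
  have hIg : ∫ x, g x ∂μ0 = Real.exp M / 2 * I + Real.exp (3*M) / 2 * (Zμ - Zν) ^ 2 := by
    rw [hgdef, integral_add (hint_sq.const_mul _) (integrable_const _), integral_const_mul,
      integral_const]
    simp [hIdef]
  have hmain : (1/2) * ∫ x,
      (Real.sqrt (Real.exp (-Φ x) / Zμ) - Real.sqrt (Real.exp (-Ψ x) / Zν)) ^ 2 ∂μ0
      ≤ Real.exp (5*M/2) ^ 2 * I := by
    have hC2 : Real.exp (5*M/2) ^ 2 = Real.exp (5*M) := by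
      rw [sq, ← Real.exp_add]; ring_nf
    have he1 : Real.exp M ≤ Real.exp (5*M) := Real.exp_le_exp.2 (by linarith)
    have he2 : Real.exp (3*M) ≤ Real.exp (5*M) := Real.exp_le_exp.2 (by linarith)
    have h3 : Real.exp (3*M) / 2 * (Zμ - Zν) ^ 2 ≤ Real.exp (3*M) / 2 * I :=
      mul_le_mul_of_nonneg_left hD2 (by positivity)
    rw [hC2]
    linarith only [hIT, hIg, h3, mul_le_mul_of_nonneg_right he1 hI0,
      mul_le_mul_of_nonneg_right he2 hI0, mul_nonneg (Real.exp_pos (5*M)).le hI0]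
  calc Real.sqrt ((1/2) * ∫ x,
        (Real.sqrt (Real.exp (-Φ x) / Zμ) - Real.sqrt (Real.exp (-Ψ x) / Zν)) ^ 2 ∂μ0)
      ≤ Real.sqrt (Real.exp (5*M/2) ^ 2 * I) := Real.sqrt_le_sqrt hmain
    _ = Real.exp (5*M/2) * Real.sqrt I := by
        rw [Real.sqrt_mul (sq_nonneg _), Real.sqrt_sq (Real.exp_pos _).le]
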